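/- There exists a real constant A > 1 such that for all n ∈ ℕ with n ≥ 1 and all z = x + iy ∈ ℂ with −nA < x ≤ 0 and |y| < |x|/2, one has |1 + z/n|ⁿ ≤ exp(x/2). -/

import Mathlib

open Complex

theorem stmt_7 :
    ∃ A : ℝ, 1 < A ∧ ∀ n : ℕ, 1 ≤ n → ∀ z : ℂ,
      -(n * A) < z.re → z.re ≤ 0 → |z.im| < |z.re| / 2 →
      ‖1 + z / n‖ ^ n ≤ Real.exp (z.re / 2) := by
  refine ⟨21/20, by norm_num, fun n hn z h1 h2 h3 => ?_⟩
  have hn0 : (0:ℝ) < n := by exact_mod_cast hn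
  set u : ℝ := z.re / n with hu
  set v : ℝ := z.im / n with hv
  have hu1 : -(21/20) < u := by
    rw [hu, lt_div_iff₀ hn0]
    nlinarith
  have hu2 : u ≤ 0 := div_nonpos_of_nonpos_of_nonneg h2 hn0.le
  have hvu : |v| ≤ |u| / 2 := by
    rw [hv, hu, abs_div, abs_div, abs_of_pos hn0, div_div]
    exact div_le_div_of_nonneg_right h3.le (by positivity) |>.trans
      (le_of_eq (by ring))
  have habsu : |u| = -u := abs_of_nonpos hu2
  have hv2 : v ^ 2 ≤ u ^ 2 / 4 := by
    have := sq_le_sq' (neg_le_of_abs_le hvu) (le_of_abs_le hvu)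
    calc v ^ 2 ≤ (|u|/2)^2 := this
    _ = u ^ 2 / 4 := by rw [habsu]; ring
  -- square of the absolute value
  have hsq : ‖1 + z / n‖ ^ 2 = (1 + u)^2 + v^2 := by
    rw [Complex.sq_norm, Complex.normSq_apply]
    simp [Complex.add_re, Complex.add_im, Complex.div_natCast_re,
      Complex.div_natCast_im, hu, hv]
    ring
  have key : ‖1 + z / n‖ ^ 2 ≤ Real.exp u := by
    rw [hsq]
    have h14 : (0:ℝ) ≤ 1 + u/4 := by nlinarith
    have hexp : 1 + u/4 ≤ Real.exp (u/4) := by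
      have := Real.add_one_le_exp (u/4); linarith
    have hpow : (1 + u/4)^4 ≤ Real.exp (u/4) ^ 4 :=
      pow_le_pow_left₀ h14 hexp 4
    have hexp4 : Real.exp (u/4) ^ 4 = Real.exp u := by
      rw [← Real.exp_nat_mul]; congr 1; push_cast; ring
    nlinarith [hpow, hexp4]
  have hstep : ‖1 + z / n‖ ≤ Real.exp (u / 2) := by
    have h2' : ‖1 + z / n‖ ^ 2 ≤ Real.exp (u/2) ^ 2 := by
      rw [← Real.exp_nat_mul]
      calc ‖1 + z / n‖ ^ 2 ≤ Real.exp u := key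
      _ = Real.exp (2 * (u/2)) := by ring_nf
      _ = Real.exp ((2:ℕ) * (u/2)) := by norm_num
    exact le_of_pow_le_pow_left₀ two_ne_zero (Real.exp_pos _).le h2'
  calc ‖1 + z / n‖ ^ n ≤ Real.exp (u/2) ^ n :=
        pow_le_pow_left₀ (norm_nonneg _) hstep n
  _ = Real.exp (n * (u/2)) := (Real.exp_nat_mul _ _).symm
  _ = Real.exp (z.re / 2) := by
      rw [hu]; congr 1; field_simp
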